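/- Let f : ℝᴰ → ℝ be twice differentiable and nonnegative, with ‖∇²f(θ)‖_{p→q} ≤ H₀ + H₁·f(θ) for all θ (H₀ ≥ 0, H₁ > 0, 1/p + 1/q = 1). Then for all x, y: f(y) + H₀/H₁ ≤ (f(x) + H₀/H₁)·exp(√H₁·‖y − x‖_p). -/

import Mathlib

open scoped BigOperators

noncomputable def lpNorm (p : ENNReal) {ι : Type*} [Fintype ι] (x : ι → ℝ) : ℝ :=
  ‖(WithLp.equiv p (ι → ℝ)).symm x‖

noncomputable def opNorm (p q : ENNReal) {ι κ : Type*} [Fintype ι] [Fintype κ]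
    (A : Matrix ι κ ℝ) : ℝ :=
  sSup {c | ∃ x : κ → ℝ, lpNorm p x ≤ 1 ∧ c = lpNorm q (A.mulVec x)}

noncomputable def dotCLM {n : ℕ} (v : Fin n → ℝ) : (Fin n → ℝ) →L[ℝ] ℝ :=
  LinearMap.toContinuousLinearMap (∑ i, v i • (LinearMap.proj i : (Fin n → ℝ) →ₗ[ℝ] ℝ))

noncomputable def mulVecCLM {m n : ℕ} (M : Matrix (Fin m) (Fin n) ℝ) :
    (Fin n → ℝ) →L[ℝ] (Fin m → ℝ) :=
  LinearMap.toContinuousLinearMap M.mulVecLin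

lemma lpNorm_eq_sum {ι : Type*} [Fintype ι] {p : ENNReal} (hp : 0 < p.toReal) (x : ι → ℝ) :
    lpNorm p x = (∑ i, |x i| ^ p.toReal) ^ (1 / p.toReal) := by
  rw [lpNorm, PiLp.norm_eq_sum hp]; simp [Real.norm_eq_abs]

lemma lpNorm_top {ι : Type*} [Fintype ι] (x : ι → ℝ) :
    lpNorm ⊤ x = ⨆ i, |x i| := by
  rw [lpNorm, PiLp.norm_eq_ciSup]; simp [Real.norm_eq_abs]

lemma lpNorm_one {ι : Type*} [Fintype ι] (x : ι → ℝ) :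
    lpNorm 1 x = ∑ i, |x i| := by
  rw [lpNorm_eq_sum (by norm_num)]; simp

lemma lpNorm_nonneg {ι : Type*} [Fintype ι] (p : ENNReal) (hp : 1 ≤ p) (x : ι → ℝ) :
    0 ≤ lpNorm p x := by
  haveI : Fact (1 ≤ p) := ⟨hp⟩; exact norm_nonneg _

lemma abs_le_lpNorm_top {ι : Type*} [Fintype ι] (x : ι → ℝ) (i : ι) :
    |x i| ≤ lpNorm ⊤ x := by
  rw [lpNorm_top]
  exact le_ciSup (f := fun i => |x i|) (Set.Finite.bddAbove (Set.finite_range _)) i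

lemma holder {ι : Type*} [Fintype ι] {p q : ENNReal} (hp : 1 ≤ p) (hq : 1 ≤ q)
    (hpq : 1/p + 1/q = 1) (u w : ι → ℝ) :
    ∑ i, u i * w i ≤ lpNorm p u * lpNorm q w := by
  rw [one_div, one_div] at hpq
  rcases eq_or_ne p 1 with rfl | hp1
  · have hq' : q = ⊤ := by
      have h0 : q⁻¹ = 0 := by
        have := hpq
        rw [show (1:ENNReal)⁻¹ = 1 by simp] at this
        exact by
          have h1 : (1:ENNReal) + q⁻¹ = 1 + 0 := by simpa using this
          exact (ENNReal.add_right_inj ENNReal.one_ne_top).1 h1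
      have : q⁻¹ = 0 := h0
      simpa using this
    subst hq'
    rw [lpNorm_one]
    calc ∑ i, u i * w i ≤ ∑ i, |u i| * lpNorm ⊤ w := by
          refine Finset.sum_le_sum fun i _ => ?_
          calc u i * w i ≤ |u i * w i| := le_abs_self _
            _ = |u i| * |w i| := abs_mul _ _
            _ ≤ |u i| * lpNorm ⊤ w := by
                exact mul_le_mul_of_nonneg_left (abs_le_lpNorm_top w i) (abs_nonneg _)
      _ = (∑ i, |u i|) * lpNorm ⊤ w := by rw [← Finset.sum_mul]
  rcases eq_or_ne q 1 with rfl | hq1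
  · have hp' : p = ⊤ := by
      have h0 : p⁻¹ = 0 := by
        have := hpq
        rw [show (1:ENNReal)⁻¹ = 1 by simp, add_comm] at this
        exact by
          have h1 : (1:ENNReal) + p⁻¹ = 1 + 0 := by simpa using this
          exact (ENNReal.add_right_inj ENNReal.one_ne_top).1 h1
      have : p⁻¹ = 0 := h0
      simpa using this
    subst hp'
    rw [lpNorm_one]
    calc ∑ i, u i * w i ≤ ∑ i, lpNorm ⊤ u * |w i| := by
          refine Finset.sum_le_sum fun i _ => ?_
          calc u i * w i ≤ |u i * w i| := le_abs_self _
            _ = |u i| * |w i| := abs_mul _ _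
            _ ≤ lpNorm ⊤ u * |w i| := by
                exact mul_le_mul_of_nonneg_right (abs_le_lpNorm_top u i) (abs_nonneg _)
      _ = lpNorm ⊤ u * ∑ i, |w i| := by rw [← Finset.mul_sum]
  · have hpt : p ≠ ⊤ := by
      rintro rfl
      simp only [ENNReal.inv_top, zero_add] at hpq
      exact hq1 (by simpa using congrArg (·⁻¹) hpq)
    have hqt : q ≠ ⊤ := by
      rintro rfl
      simp only [ENNReal.inv_top, add_zero] at hpq
      exact hp1 (by simpa using congrArg (·⁻¹) hpq)
    have hp1' : 1 < p.toReal := by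
      rcases lt_of_le_of_ne hp (Ne.symm hp1) with h
      have := ENNReal.toReal_lt_toReal (by norm_num) hpt |>.2 h
      simpa using this
    have hconj : p.toReal.HolderConjugate q.toReal := by
      rw [Real.holderConjugate_iff]
      constructor
      · exact hp1'
      · have := congrArg ENNReal.toReal hpq
        rw [ENNReal.toReal_add (by simp [ENNReal.inv_ne_top, (zero_lt_one.trans_le hp).ne']) (by simp [ENNReal.inv_ne_top, (zero_lt_one.trans_le hq).ne'])] at this
        simpa [ENNReal.toReal_inv, one_div] using this
    have hppos : 0 < p.toReal := by linarith
    have hqpos : 0 < q.toReal := hconj.symm.pos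
    rw [lpNorm_eq_sum hppos, lpNorm_eq_sum hqpos]
    exact Real.inner_le_Lp_mul_Lq Finset.univ u w hconj

lemma opNorm_bddAbove {ι κ : Type*} [Fintype ι] [Fintype κ] (p q : ENNReal)
    (hp : 1 ≤ p) (hq : 1 ≤ q) (A : Matrix ι κ ℝ) :
    BddAbove {c | ∃ x : κ → ℝ, lpNorm p x ≤ 1 ∧ c = lpNorm q (A.mulVec x)} := by
  haveI : Fact (1 ≤ p) := ⟨hp⟩
  haveI : Fact (1 ≤ q) := ⟨hq⟩
  have hset : {c | ∃ x : κ → ℝ, lpNorm p x ≤ 1 ∧ c = lpNorm q (A.mulVec x)} =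
      (fun y : PiLp p (fun _ : κ => ℝ) =>
        lpNorm q (A.mulVec ((WithLp.equiv p (κ → ℝ)) y))) '' (Metric.closedBall 0 1) := by
    ext c
    constructor
    · rintro ⟨x, hx, rfl⟩
      exact ⟨(WithLp.equiv p (κ → ℝ)).symm x, by simpa [lpNorm, Metric.mem_closedBall, dist_zero_right] using hx, by simp⟩
    · rintro ⟨y, hy, rfl⟩
      exact ⟨(WithLp.equiv p (κ → ℝ)) y, by simpa [lpNorm, Metric.mem_closedBall, dist_zero_right] using hy, rfl⟩
  rw [hset]
  have hcont : Continuous (fun y : PiLp p (fun _ : κ => ℝ) =>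
      lpNorm q (A.mulVec ((WithLp.equiv p (κ → ℝ)) y))) := by
    apply continuous_norm.comp
    apply (PiLp.continuous_toLp q (fun _ : ι => ℝ)).comp
    exact (LinearMap.continuous_of_finiteDimensional A.mulVecLin).comp
      (PiLp.continuous_ofLp p (fun _ : κ => ℝ))
  exact ((isCompact_closedBall 0 1).image hcont).bddAbove

lemma opNorm_nonneg {ι κ : Type*} [Fintype ι] [Fintype κ] (p q : ENNReal)
    (hp : 1 ≤ p) (hq : 1 ≤ q) (A : Matrix ι κ ℝ) : 0 ≤ opNorm p q A := by
  haveI : Fact (1 ≤ p) := ⟨hp⟩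
  haveI : Fact (1 ≤ q) := ⟨hq⟩
  have h0 : (0:ℝ) ∈ {c | ∃ x : κ → ℝ, lpNorm p x ≤ 1 ∧ c = lpNorm q (A.mulVec x)} := by
    refine ⟨0, ?_, ?_⟩ <;> simp [lpNorm]
  exact le_csSup (opNorm_bddAbove p q hp hq A) h0

lemma lpNorm_mulVec_le {ι κ : Type*} [Fintype ι] [Fintype κ] (p q : ENNReal)
    (hp : 1 ≤ p) (hq : 1 ≤ q) (A : Matrix ι κ ℝ) (x : κ → ℝ) :
    lpNorm q (A.mulVec x) ≤ opNorm p q A * lpNorm p x := by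
  haveI : Fact (1 ≤ p) := ⟨hp⟩
  haveI : Fact (1 ≤ q) := ⟨hq⟩
  rcases eq_or_ne x 0 with rfl | hx
  · simp [lpNorm, Matrix.mulVec_zero]
  · have hpos : 0 < lpNorm p x := by
      have : lpNorm p x ≠ 0 := by
        simpa [lpNorm, norm_eq_zero] using
          fun h => hx (by simpa using h)
      exact lt_of_le_of_ne (norm_nonneg _) (Ne.symm this)
    set t := lpNorm p x with ht
    have hsmul : lpNorm p (t⁻¹ • x) = 1 := by
      have : (WithLp.equiv p (κ → ℝ)).symm (t⁻¹ • x)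
          = t⁻¹ • (WithLp.equiv p (κ → ℝ)).symm x := rfl
      rw [lpNorm, this, norm_smul, Real.norm_eq_abs, abs_of_pos (by positivity)]
      rw [show ‖(WithLp.equiv p (κ → ℝ)).symm x‖ = t from rfl]
      field_simp
    have hmem : lpNorm q (A.mulVec (t⁻¹ • x)) ∈
        {c | ∃ x : κ → ℝ, lpNorm p x ≤ 1 ∧ c = lpNorm q (A.mulVec x)} :=
      ⟨t⁻¹ • x, le_of_eq hsmul, rfl⟩
    have hle := le_csSup (opNorm_bddAbove p q hp hq A) hmem
    have heq : lpNorm q (A.mulVec (t⁻¹ • x)) = t⁻¹ * lpNorm q (A.mulVec x) := by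
      rw [Matrix.mulVec_smul]
      have : (WithLp.equiv q (ι → ℝ)).symm (t⁻¹ • A.mulVec x)
          = t⁻¹ • (WithLp.equiv q (ι → ℝ)).symm (A.mulVec x) := rfl
      rw [lpNorm, this, norm_smul, Real.norm_eq_abs, abs_of_pos (by positivity), lpNorm]
    rw [heq] at hle
    calc lpNorm q (A.mulVec x) = t * (t⁻¹ * lpNorm q (A.mulVec x)) := by field_simp
      _ ≤ t * opNorm p q A := by exact mul_le_mul_of_nonneg_left hle hpos.le
      _ = opNorm p q A * t := mul_comm _ _


lemma ode_grad {φ φ' φ'' : ℝ → ℝ} {c : ℝ} (hc : 0 < c)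
    (h1 : ∀ t, HasDerivAt φ (φ' t) t) (h2 : ∀ t, HasDerivAt φ' (φ'' t) t)
    (hnn : ∀ t, 0 ≤ φ t) (hb : ∀ t, φ'' t ≤ c^2 * φ t) :
    ∀ s, φ' s ≤ c * φ s := by
  by_contra hcon
  push_neg at hcon
  obtain ⟨s, hs⟩ := hcon
  set ψ : ℝ → ℝ := fun t => φ' t - c * φ t with hψdef
  have hψ : ∀ t, HasDerivAt ψ (φ'' t - c * φ' t) t :=
    fun t => (h2 t).sub ((h1 t).const_mul c)
  set F : ℝ → ℝ := fun t => ψ t * Real.exp (c * t) with hFdef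
  have hexp : ∀ t : ℝ, HasDerivAt (fun t => Real.exp (c * t)) (Real.exp (c * t) * c) t :=
    fun t => ((hasDerivAt_id t).const_mul c).exp.congr_deriv (by simp)
  have hF : ∀ t, HasDerivAt F ((φ'' t - c * φ' t) * Real.exp (c * t)
      + ψ t * (Real.exp (c * t) * c)) t := fun t => (hψ t).mul (hexp t)
  have hF' : ∀ t, (φ'' t - c * φ' t) * Real.exp (c * t) + ψ t * (Real.exp (c * t) * c) ≤ 0 := by
    intro t
    have hE := Real.exp_pos (c * t)
    have h := hb t
    have : (φ'' t - c * φ' t) * Real.exp (c * t) + ψ t * (Real.exp (c * t) * c)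
        = Real.exp (c * t) * (φ'' t - c^2 * φ t) := by rw [hψdef]; ring
    rw [this]
    exact mul_nonpos_of_nonneg_of_nonpos hE.le (by linarith)
  have hFanti : Antitone F := by
    apply antitone_of_deriv_nonpos (fun t => (hF t).differentiableAt)
    intro t
    rw [(hF t).deriv]
    exact hF' t
  set A : ℝ := F s with hAdef
  have hψs : 0 < ψ s := by simp only [hψdef]; linarith
  have hApos : 0 < A := mul_pos hψs (Real.exp_pos _)
  have hψlb : ∀ t ≤ s, A * Real.exp (-(c * t)) ≤ ψ t := by
    intro t ht
    have := hFanti ht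
    have hE := Real.exp_pos (c * t)
    rw [hFdef] at this
    have h2 : A ≤ ψ t * Real.exp (c * t) := this
    have h3 : A / Real.exp (c * t) ≤ ψ t := (div_le_iff₀ hE).2 h2
    rw [Real.exp_neg, ← div_eq_mul_inv]
    exact h3
  set K : ℝ := φ s + (A / c) * Real.exp (-(c * s)) with hKdef
  have hKpos : 0 < K := by
    have h1' := hnn s
    have h2' : 0 < (A / c) * Real.exp (-(c * s)) := by positivity
    rw [hKdef]
    linarith
  set G : ℝ → ℝ := fun t => φ t + (A / c) * Real.exp (-(c * t)) with hGdef
  have hexp' : ∀ t : ℝ, HasDerivAt (fun t => Real.exp (-(c * t))) (-(Real.exp (-(c * t)) * c)) t := by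
    intro t
    have := (((hasDerivAt_id t).const_mul c).neg).exp
    exact this.congr_deriv (by simp)
  have hG : ∀ t, HasDerivAt G (φ' t - (A / c) * (Real.exp (-(c * t)) * c)) t := by
    intro t
    have := (h1 t).add (((hexp' t).const_mul (A / c)))
    exact this.congr_deriv (by ring)
  have hGmono : MonotoneOn G (Set.Iic s) := by
    apply monotoneOn_of_deriv_nonneg (convex_Iic s)
    · exact fun t _ => (hG t).differentiableAt.continuousAt.continuousWithinAt
    · exact fun t _ => (hG t).differentiableAt.differentiableWithinAt
    · intro t ht
      rw [interior_Iic] at ht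
      rw [(hG t).deriv]
      have h1' := hψlb t ht.le
      have h2' : (A / c) * (Real.exp (-(c * t)) * c) = A * Real.exp (-(c * t)) := by
        field_simp
        try ring
      rw [h2']
      have : ψ t ≤ φ' t := by
        simp only [hψdef]
        nlinarith [mul_nonneg hc.le (hnn t)]
      linarith
  have hbound : ∀ t ≤ s, (A / c) * Real.exp (-(c * t)) ≤ K := by
    intro t ht
    have := hGmono (Set.mem_Iic.2 ht) (Set.mem_Iic.2 le_rfl) ht
    have hφt := hnn t
    rw [hGdef] at this
    simp only at this
    rw [hKdef]
    linarith
  -- choose t0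
  set B : ℝ := c * K / A with hBdef
  have hBpos : 0 < B := by positivity
  set t0 : ℝ := min s (-(Real.log B + 1) / c) with ht0def
  have ht0s : t0 ≤ s := min_le_left _ _
  have hlarge : Real.log B + 1 ≤ -(c * t0) := by
    have h := min_le_right s (-(Real.log B + 1) / c)
    have := mul_le_mul_of_nonneg_left h hc.le
    rw [mul_div_cancel₀ _ hc.ne'] at this
    linarith
  have hexpge : B * Real.exp 1 ≤ Real.exp (-(c * t0)) := by
    calc B * Real.exp 1 = Real.exp (Real.log B) * Real.exp 1 := by rw [Real.exp_log hBpos]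
      _ = Real.exp (Real.log B + 1) := (Real.exp_add _ _).symm
      _ ≤ Real.exp (-(c * t0)) := Real.exp_le_exp.2 hlarge
  have hKlt : K < (A / c) * Real.exp (-(c * t0)) := by
    have he1 : (2:ℝ) < Real.exp 1 := by
      have := Real.exp_one_gt_d9
      linarith
    have : B * 2 < B * Real.exp 1 := by nlinarith
    have h3 : (A / c) * (B * 2) = 2 * K := by
      rw [hBdef]; field_simp
    have h4 : (A / c) * (B * Real.exp 1) ≤ (A / c) * Real.exp (-(c * t0)) :=
      mul_le_mul_of_nonneg_left hexpge (by positivity)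
    nlinarith [div_pos hApos hc]
  exact absurd (hbound t0 ht0s) (not_le.2 hKlt)

lemma ode_main {φ φ' φ'' : ℝ → ℝ} {c : ℝ} (hc : 0 < c)
    (h1 : ∀ t, HasDerivAt φ (φ' t) t) (h2 : ∀ t, HasDerivAt φ' (φ'' t) t)
    (hnn : ∀ t, 0 ≤ φ t) (hb : ∀ t, φ'' t ≤ c^2 * φ t) :
    φ 1 ≤ φ 0 * Real.exp c := by
  have key := ode_grad hc h1 h2 hnn hb
  set F : ℝ → ℝ := fun t => φ t * Real.exp (-(c * t)) with hFdef
  have hexp' : ∀ t : ℝ, HasDerivAt (fun t => Real.exp (-(c * t))) (-(Real.exp (-(c * t)) * c)) t := by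
    intro t
    exact (((hasDerivAt_id t).const_mul c).neg).exp.congr_deriv (by simp)
  have hF : ∀ t, HasDerivAt F (φ' t * Real.exp (-(c * t)) + φ t * -(Real.exp (-(c * t)) * c)) t :=
    fun t => (h1 t).mul (hexp' t)
  have hFanti : Antitone F := by
    apply antitone_of_deriv_nonpos (fun t => (hF t).differentiableAt)
    intro t
    rw [(hF t).deriv]
    have hE := Real.exp_pos (-(c * t))
    have := key t
    nlinarith
  have := hFanti (by norm_num : (0:ℝ) ≤ 1)
  rw [hFdef] at this
  simp only at this
  rw [mul_zero, neg_zero, Real.exp_zero, mul_one, mul_one] at this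
  have hh : Real.exp (-c) * Real.exp c = 1 := by
    rw [← Real.exp_add]; norm_num
  have h5 := mul_le_mul_of_nonneg_right this (Real.exp_pos c).le
  rw [mul_assoc, hh, mul_one] at h5
  exact h5

lemma dotCLM_apply {n : ℕ} (v w : Fin n → ℝ) : dotCLM v w = ∑ i, v i * w i := by
  simp [dotCLM, LinearMap.sum_apply, LinearMap.smul_apply, smul_eq_mul]

lemma mulVecCLM_apply {m n : ℕ} (M : Matrix (Fin m) (Fin n) ℝ) (x : Fin n → ℝ) :
    mulVecCLM M x = M.mulVec x := rfl


theorem stmt3 {D : ℕ} (p q : ENNReal) (hp : 1 ≤ p) (hq : 1 ≤ q) (hpq : 1/p + 1/q = 1)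
    (f : (Fin D → ℝ) → ℝ) (g : (Fin D → ℝ) → (Fin D → ℝ))
    (Hess : (Fin D → ℝ) → Matrix (Fin D) (Fin D) ℝ)
    (hfnn : ∀ θ, 0 ≤ f θ)
    (hgrad : ∀ θ, HasFDerivAt f (dotCLM (g θ)) θ)
    (hhess : ∀ θ, HasFDerivAt g (mulVecCLM (Hess θ)) θ)
    (H0 H1 : ℝ) (hH0 : 0 ≤ H0) (hH1 : 0 < H1)
    (hnus : ∀ θ, opNorm p q (Hess θ) ≤ H0 + H1 * f θ) :
    ∀ x y, f y + H0 / H1 ≤ (f x + H0 / H1) * Real.exp (Real.sqrt H1 * lpNorm p (y - x)) := by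
  intro x y
  haveI : Fact (1 ≤ p) := ⟨hp⟩
  haveI : Fact (1 ≤ q) := ⟨hq⟩
  rcases eq_or_ne y x with rfl | hyx
  · have h0 : lpNorm p (y - y) = 0 := by
      rw [sub_self]
      simp [lpNorm]
    rw [h0, mul_zero, Real.exp_zero, mul_one]
  · set v : Fin D → ℝ := y - x with hv
    have hvne : v ≠ 0 := sub_ne_zero.2 hyx
    have hvpos : 0 < lpNorm p v := by
      have hne : lpNorm p v ≠ 0 := by
        intro h
        apply hvne
        have := norm_eq_zero.1 h
        simpa using congrArg (WithLp.equiv p (Fin D → ℝ)) this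
      exact lt_of_le_of_ne (lpNorm_nonneg p hp v) (Ne.symm hne)
    set c : ℝ := Real.sqrt H1 * lpNorm p v with hc
    have hcpos : 0 < c := mul_pos (Real.sqrt_pos.2 hH1) hvpos
    have hθd : ∀ t : ℝ, HasDerivAt (fun t : ℝ => x + t • v) v t := by
      intro t
      have := ((hasDerivAt_id t).smul_const v).const_add x
      simpa using this
    set φ : ℝ → ℝ := fun t => f (x + t • v) + H0 / H1 with hφdef
    set φ' : ℝ → ℝ := fun t => ∑ i, v i * g (x + t • v) i with hφ'def
    set φ'' : ℝ → ℝ := fun t => ∑ i, v i * ((Hess (x + t • v)).mulVec v) i with hφ''def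
    have hφ1 : ∀ t, HasDerivAt φ (φ' t) t := by
      intro t
      have h := (hgrad (x + t • v)).comp_hasDerivAt t (hθd t)
      have hd : dotCLM (g (x + t • v)) v = φ' t := by
        rw [dotCLM_apply]; exact Finset.sum_congr rfl fun i _ => mul_comm _ _
      exact (h.congr_deriv hd).add_const _
    have hφ2 : ∀ t, HasDerivAt φ' (φ'' t) t := by
      intro t
      have hgθ : HasDerivAt (fun t : ℝ => g (x + t • v)) ((mulVecCLM (Hess (x + t • v))) v) t :=
        (hhess (x + t • v)).comp_hasDerivAt t (hθd t)
      have h := (dotCLM v).hasFDerivAt.comp_hasDerivAt t hgθ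
      have he : (fun t : ℝ => (dotCLM v) (g (x + t • v))) = φ' := by
        funext t; rw [dotCLM_apply]
      have he2 : (dotCLM v) ((mulVecCLM (Hess (x + t • v))) v) = φ'' t := by
        rw [dotCLM_apply, mulVecCLM_apply]
      rw [← he, ← he2]
      exact h
    have hnnφ : ∀ t, 0 ≤ φ t := fun t => add_nonneg (hfnn _) (div_nonneg hH0 hH1.le)
    have hbb : ∀ t, φ'' t ≤ c ^ 2 * φ t := by
      intro t
      have hH := holder hp hq hpq v ((Hess (x + t • v)).mulVec v)
      have hop := lpNorm_mulVec_le p q hp hq (Hess (x + t • v)) v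
      have hnus' := hnus (x + t • v)
      have hc2 : c ^ 2 = H1 * lpNorm p v ^ 2 := by
        rw [hc, mul_pow, Real.sq_sqrt hH1.le]
      calc φ'' t ≤ lpNorm p v * lpNorm q ((Hess (x + t • v)).mulVec v) := hH
        _ ≤ lpNorm p v * (opNorm p q (Hess (x + t • v)) * lpNorm p v) :=
            mul_le_mul_of_nonneg_left hop hvpos.le
        _ = opNorm p q (Hess (x + t • v)) * lpNorm p v ^ 2 := by ring
        _ ≤ (H0 + H1 * f (x + t • v)) * lpNorm p v ^ 2 :=
            mul_le_mul_of_nonneg_right hnus' (by positivity)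
        _ = c ^ 2 * φ t := by
            rw [hc2, hφdef]
            field_simp
            ring
    have hmain := ode_main hcpos hφ1 hφ2 hnnφ hbb
    have h1 : x + (1:ℝ) • v = y := by rw [hv]; simp
    have h0 : x + (0:ℝ) • v = x := by simp
    rw [hφdef] at hmain
    simp only [h1, h0] at hmain
    exact hmain
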